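/- In the relational model D, the interpretation of D[I^!] (the term λx.x[x] applied to the promoted bag [I^!]) equals {[γ] :: γ | γ ∈ D}. -/
import Mathlib


variable {D : Type*}

/-- `b :: α`: prepending a multiset to an element of `D ≅ Multiset D × D`. -/
def dcons (e : D ≃ Multiset D × D) (b : Multiset D) (α : D) : D := e.symm (b, α)

/-- `⟦I⟧ = {[γ] :: γ | γ ∈ D}`. -/
def interpI (e : D ≃ Multiset D × D) : Set D := {d | ∃ γ : D, d = dcons e {γ} γ}

/-- `⟦D⟧ = {[[α]::β, α] :: β | α, β ∈ D}` for the term `D = λx.x[x]`. -/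
def interpDD (e : D ≃ Multiset D × D) : Set D :=
  {d | ∃ α β : D, d = dcons e {dcons e {α} β, α} β}

lemma dcons_inj (e : D ≃ Multiset D × D) {b c : Multiset D} {α β : D}
    (h : dcons e b α = dcons e c β) : b = c ∧ α = β := by
  have := e.symm.injective h
  exact ⟨congrArg Prod.fst this, congrArg Prod.snd this⟩

/-- In the relational model, the interpretation of `D[I^!]` (application with a promoted
bag: `⟦M[N^!]⟧ = {α | ∃ b ∈ Multiset ⟦N⟧, b :: α ∈ ⟦M⟧}`) equals `{[γ] :: γ | γ ∈ D}`. -/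
theorem interp_D_of_bang_I (e : D ≃ Multiset D × D) :
    {α : D | ∃ b : Multiset D, (∀ x ∈ b, x ∈ interpI e) ∧ dcons e b α ∈ interpDD e}
      = {α : D | ∃ γ : D, α = dcons e {γ} γ} := by
  ext α
  simp only [Set.mem_setOf_eq]
  constructor
  · rintro ⟨b, hb, α', β', h⟩
    obtain ⟨hbeq, hαβ⟩ := dcons_inj e h
    subst hbeq
    have h1 : dcons e {α'} β' ∈ interpI e := hb _ (by simp)
    have h2 : α' ∈ interpI e := hb _ (by simp)
    obtain ⟨γ, hγ⟩ := h1
    obtain ⟨hs, hβγ⟩ := dcons_inj e hγ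
    have hαγ : α' = γ := by simpa using hs
    obtain ⟨γ', hγ'⟩ := h2
    exact ⟨γ', by rw [hαβ, hβγ, ← hαγ, hγ']⟩
  · rintro ⟨γ, rfl⟩
    refine ⟨{dcons e {dcons e {γ} γ} (dcons e {γ} γ), dcons e {γ} γ}, ?_, ?_⟩
    · intro x hx
      rcases Multiset.mem_cons.mp hx with rfl | hx
      · exact ⟨dcons e {γ} γ, rfl⟩
      · have : x = dcons e {γ} γ := by simpa using hx
        exact ⟨γ, this⟩
    · exact ⟨dcons e {γ} γ, dcons e {γ} γ, rfl⟩
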